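/- Let Φ and Ψ be representation forms on a Lie group G with values in End(V) such that Φ^{(0)} = Ψ^{(0)} and Φ^{(1)} = Ψ^{(1)}. Then Φ^{(k)} = Ψ^{(k)} for all k, i.e. Φ = Ψ. -/
import Mathlib


/-! **Statement 15 (Lemma "injective").** Two representation forms `Φ, Ψ` on a Lie group `G`
with values in `End(V)` which coincide in degrees 0 and 1 are equal.

Conventions as in Statement 14: forms are written in the left trivialization of `TG`, the
`μ*` multiplicativity is recorded on split tangent vectors (via `Ad`), and the exterior
derivative is computed by the standard formula on left-invariant vector fields. -/

namespace Stmt15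

variable {𝔤 : Type*} [LieRing 𝔤] [LieAlgebra ℝ 𝔤]

/-- The tuple `x` with its `p`-th entry removed. -/
def removeOne {α : Type*} {n : ℕ} (x : Fin (n + 1) → α) (p : Fin (n + 1)) : Fin n → α :=
  fun m => x ⟨if m.val < p.val then m.val else m.val + 1, by have := m.isLt; split_ifs <;> omega⟩

/-- `(⁅x p, x q⁆, x₀, …, x̂_p, …, x̂_q, …, x_n)` for `p < q`. -/
def bracketTuple {n : ℕ} (x : Fin (n + 1) → 𝔤) (p q : Fin (n + 1)) : Fin n → 𝔤 :=
  fun l =>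
    if l.val = 0 then ⁅x p, x q⁆
    else
      x ⟨if l.val - 1 < p.val then l.val - 1 else if l.val < q.val then l.val else l.val + 1,
        by have := l.isLt; split_ifs <;> omega⟩

variable {G : Type*} [Group G] {V : Type*} [NormedAddCommGroup V] [NormedSpace ℝ V]

/-- The de Rham differential in the left trivialization. -/
noncomputable def dForm (exp : 𝔤 → G)
    (Φ : ∀ k : ℕ, G → (Fin k → 𝔤) → (V →L[ℝ] V))
    (k : ℕ) (g : G) (x : Fin (k + 1) → 𝔤) : V →L[ℝ] V :=
  (∑ p : Fin (k + 1), ((-1 : ℝ) ^ p.val) •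
      deriv (fun t : ℝ => Φ k (g * exp (t • x p)) (removeOne x p)) 0)
    + ∑ p : Fin (k + 1), ∑ q : Fin (k + 1),
        if p.val < q.val then
          ((-1 : ℝ) ^ (p.val + q.val)) • Φ k g (bracketTuple x p q)
        else 0

/-- The conditions making `Φ` a representation form. -/
def IsRepresentationForm (exp : 𝔤 → G) (Ad : G →* (Module.End ℝ 𝔤)ˣ) (δ : V →L[ℝ] V)
    (Φ : ∀ k : ℕ, G → (Fin k → 𝔤) → (V →L[ℝ] V)) : Prop :=
  Φ 0 1 (fun i => i.elim0) = 1
  ∧ (∀ (k : ℕ) (g : G) (x : Fin (k + 1) → 𝔤),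
      dForm exp Φ k g x
        = ((-1 : ℝ) ^ k) • (δ * Φ (k + 1) g x + ((-1 : ℝ) ^ k) • (Φ (k + 1) g x * δ)))
  ∧ (∀ (a b : ℕ) (g h : G) (y : Fin a → 𝔤) (z : Fin b → 𝔤),
      Φ (a + b) (g * h) (Fin.append (fun l => (Ad h⁻¹ : Module.End ℝ 𝔤) (y l)) z)
        = Φ a g y * Φ b h z)

/-- A representation form is determined by its components of degrees 0 and 1. -/
theorem representation_form_unique (exp : 𝔤 → G) (Ad : G →* (Module.End ℝ 𝔤)ˣ)
    (δ : V →L[ℝ] V)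
    (Φ Ψ : ∀ k : ℕ, G → (Fin k → 𝔤) → (V →L[ℝ] V))
    (hΦ : IsRepresentationForm exp Ad δ Φ)
    (hΨ : IsRepresentationForm exp Ad δ Ψ)
    (h0 : Φ 0 = Ψ 0) (h1 : Φ 1 = Ψ 1) :
    Φ = Ψ := by
  funext k
  induction k with
  | zero => exact h0
  | succ n ih =>
    funext g x
    have hx : Fin.append (fun i : Fin n => x i.castSucc) (fun _ : Fin 1 => x (Fin.last n)) = x := by
      funext i
      refine Fin.lastCases ?_ ?_ i
      · have : Fin.last n = Fin.natAdd n (0 : Fin 1) := rfl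
        rw [this, Fin.append_right]
      · intro j
        have : (j.castSucc : Fin (n + 1)) = Fin.castAdd 1 j := rfl
        rw [this, Fin.append_left]
        exact congrArg x this.symm
    have hΦm := hΦ.2.2 n 1 g 1 (fun i : Fin n => x i.castSucc) (fun _ : Fin 1 => x (Fin.last n))
    have hΨm := hΨ.2.2 n 1 g 1 (fun i : Fin n => x i.castSucc) (fun _ : Fin 1 => x (Fin.last n))
    simp only [inv_one, map_one, Units.val_one, Module.End.one_apply, mul_one, hx] at hΦm hΨm
    rw [hΦm, hΨm, ih, h1]

end Stmt15
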